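/- Suppose a bridgeless cubic graph G is covered by three subgraphs G(0,1), G(0,2), G(1,2) such that each edge of a distinguished edge set M lies in exactly one of them, each edge not in M lies in exactly two of them, and for each pair, the suppressed graph of G(α,β) is cubic and the edges of G(α,β) not in M correspond to an even 2-factor of the suppressed graph of G(α,β). Then G has a 6-even-subgraph double cover. -/

import Mathlib

namespace CDC

open SimpleGraph

/-- Number of edges in the edge set `S` incident with `v`. -/
noncomputable def esdeg {V : Type} (S : Set (Sym2 V)) (v : V) : ℕ :=
  {e ∈ S | v ∈ e}.ncard

/-- Degree of `v` in the graph `G` (as a set cardinality, no instances needed). -/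
noncomputable def ndeg {V : Type} (G : SimpleGraph V) (v : V) : ℕ :=
  (G.neighborSet v).ncard

def IsCubic {V : Type} (G : SimpleGraph V) : Prop := ∀ v, ndeg G v = 3

/-- A proper edge coloring: distinct edges sharing a vertex get distinct colors. -/
def ProperEdgeColoring {V : Type} (G : SimpleGraph V) (c : Sym2 V → ZMod 3) : Prop :=
  ∀ e₁ ∈ G.edgeSet, ∀ e₂ ∈ G.edgeSet, e₁ ≠ e₂ → (∃ v, v ∈ e₁ ∧ v ∈ e₂) → c e₁ ≠ c e₂

/-- The spanning subgraph of `G` formed by the edges whose color lies in `A`. -/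
def classGraph {V : Type} (G : SimpleGraph V) (c : Sym2 V → ZMod 3) (A : Set (ZMod 3)) :
    SimpleGraph V :=
  SimpleGraph.fromEdgeSet {e ∈ G.edgeSet | c e ∈ A}

/-- A Hamiltonian circuit (as a spanning subgraph): connected and 2-regular. -/
def IsHamCircuit {V : Type} (G : SimpleGraph V) : Prop :=
  G.Connected ∧ ∀ v, ndeg G v = 2

/-- A Kotzig graph: cubic with a proper 3-edge-coloring where each pair of
color classes forms a Hamiltonian circuit. -/
def IsKotzig {V : Type} (G : SimpleGraph V) (c : Sym2 V → ZMod 3) : Prop :=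
  IsCubic G ∧ ProperEdgeColoring G c ∧
    ∀ α β : ZMod 3, α ≠ β → IsHamCircuit (classGraph G c {α, β})

/-- Swap colors 1 and 2. -/
def swapColor : ZMod 3 → ZMod 3 := fun x => if x = 1 then 2 else if x = 2 then 1 else x

open Classical in
/-- Switch colors 1 and 2 on the edges of `S`. -/
noncomputable def switch {V : Type} (c : Sym2 V → ZMod 3) (S : Set (Sym2 V)) :
    Sym2 V → ZMod 3 :=
  fun e => if e ∈ S then swapColor (c e) else c e

/-- Property (*): proper coloring where colors {0,1} and {0,2} induce Hamiltonian circuits. -/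
def HasStar {V : Type} (G : SimpleGraph V) (c : Sym2 V → ZMod 3) : Prop :=
  ProperEdgeColoring G c ∧ IsHamCircuit (classGraph G c {0, 1}) ∧
    IsHamCircuit (classGraph G c {0, 2})

/-- The edge set of the 2-factor induced by colors 1 and 2. -/
def Fedges {V : Type} (G : SimpleGraph V) (c : Sym2 V → ZMod 3) : Set (Sym2 V) :=
  {e ∈ G.edgeSet | c e = 1 ∨ c e = 2}

/-- An even edge set: every vertex meets an even number of its edges. -/
def IsEvenEdgeSet {V : Type} (S : Set (Sym2 V)) : Prop := ∀ v, Even (esdeg S v)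

/-- A semi-Kotzig graph: cubic, property (*) holds and is preserved by switching
colors 1 and 2 on any even subgraph of the 2-factor induced by colors 1 and 2. -/
def IsSemiKotzig {V : Type} (G : SimpleGraph V) (c : Sym2 V → ZMod 3) : Prop :=
  IsCubic G ∧ HasStar G c ∧
    ∀ S ⊆ Fedges G c, IsEvenEdgeSet S → HasStar G (switch c S)

/-- An even subgraph of `G`, given by its edge set. -/
def IsEvenSubgraphOf {V : Type} (G : SimpleGraph V) (S : Set (Sym2 V)) : Prop :=
  S ⊆ G.edgeSet ∧ IsEvenEdgeSet S

/-- A 6-even-subgraph double cover. -/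
def HasSixDoubleCover {V : Type} (G : SimpleGraph V) : Prop :=
  ∃ D : Fin 6 → Set (Sym2 V), (∀ i, IsEvenSubgraphOf G (D i)) ∧
    ∀ e ∈ G.edgeSet, {i | e ∈ D i}.ncard = 2

def Bridgeless {V : Type} (G : SimpleGraph V) : Prop := ∀ e, ¬ G.IsBridge e

end CDC


namespace CDC
open SimpleGraph

/-- Subdivide the edge `s(u,v)` of `G`, introducing the new vertex `none`. -/
def subdivideEdge {α : Type} (G : SimpleGraph α) (u v : α) : SimpleGraph (Option α) :=
  SimpleGraph.fromEdgeSet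
    ({e | ∃ a b, G.Adj a b ∧ s(a, b) ≠ s(u, v) ∧ e = s(some a, some b)} ∪
      {s(none, some u), s(none, some v)})

/-- `IsSubdivisionOf G K`: `G` is (isomorphic to) a graph obtained from `K`
by repeatedly subdividing edges. -/
inductive IsSubdivisionOf : {α : Type} → SimpleGraph α → {β : Type} → SimpleGraph β → Prop
  | base {α β : Type} (G : SimpleGraph α) (K : SimpleGraph β) (f : G ≃g K) :
      IsSubdivisionOf G K
  | step {α β : Type} (G : SimpleGraph α) (K : SimpleGraph β) (u v : α) (h : G.Adj u v)
      (hGK : IsSubdivisionOf G K) : IsSubdivisionOf (subdivideEdge G u v) K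
  | iso {α α' β : Type} (G : SimpleGraph α) (G' : SimpleGraph α') (K : SimpleGraph β)
      (f : G ≃g G') (hGK : IsSubdivisionOf G K) : IsSubdivisionOf G' K

/-- Extend an edge labelling of `G` to the graph obtained by subdividing the edge
`s(u,v)`: old edges keep their labels, both new half-edges inherit the label of `s(u,v)`. -/
def extendLabel {α L : Type} (ℓ : Sym2 α → L) (u v : α) : Sym2 (Option α) → L :=
  Sym2.lift ⟨fun x y =>
    match x, y with
    | some a, some b => ℓ s(a, b)
    | _, _ => ℓ s(u, v),
    by rintro (a | a) (b | b) <;> simp only [] ; rw [Sym2.eq_swap]⟩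

/-- Labelled subdivision: `G` with edge labelling `ℓG` is obtained from `K` with edge
labelling `ℓK` by repeatedly subdividing edges, subdivided edges inheriting labels. -/
inductive IsLabeledSubdivisionOf {L : Type} :
    {α : Type} → SimpleGraph α → (Sym2 α → L) → {β : Type} → SimpleGraph β → (Sym2 β → L) → Prop
  | base {α β : Type} (G : SimpleGraph α) (ℓG : Sym2 α → L) (K : SimpleGraph β)
      (ℓK : Sym2 β → L) (f : G ≃g K) (hf : ∀ a b, G.Adj a b → ℓG s(a, b) = ℓK s(f a, f b)) :
      IsLabeledSubdivisionOf G ℓG K ℓK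
  | step {α β : Type} (G : SimpleGraph α) (ℓG : Sym2 α → L) (K : SimpleGraph β)
      (ℓK : Sym2 β → L) (u v : α) (h : G.Adj u v) (hGK : IsLabeledSubdivisionOf G ℓG K ℓK) :
      IsLabeledSubdivisionOf (subdivideEdge G u v) (extendLabel ℓG u v) K ℓK
  | iso {α α' β : Type} (G : SimpleGraph α) (G' : SimpleGraph α') (ℓG : Sym2 α → L)
      (ℓG' : Sym2 α' → L) (K : SimpleGraph β) (ℓK : Sym2 β → L) (f : G ≃g G')
      (hf : ∀ a b, G.Adj a b → ℓG s(a, b) = ℓG' s(f a, f b))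
      (hGK : IsLabeledSubdivisionOf G ℓG K ℓK) : IsLabeledSubdivisionOf G' ℓG' K ℓK

end CDC

namespace CDC
open SimpleGraph

/-- `S` is (the edge set of) an even 2-factor of `Q`: every vertex meets exactly two
edges of `S` and every circuit (component of `S`) has even length. -/
def IsEvenTwoFactorSet {W : Type} (Q : SimpleGraph W) (S : Set (Sym2 W)) : Prop :=
  S ⊆ Q.edgeSet ∧ (∀ w, esdeg S w = 2) ∧
    ∀ w : W, Even (((SimpleGraph.fromEdgeSet S).connectedComponentMk w).supp.ncard)

end CDC

namespace CDC
open SimpleGraph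


section API
variable {V : Type}

lemma esdeg_empty' (v : V) : esdeg (∅ : Set (Sym2 V)) v = 0 := by
  unfold esdeg
  simp

lemma esdeg_sep_congr {S T : Set (Sym2 V)} {v : V} (h : {e ∈ S | v ∈ e} = {e ∈ T | v ∈ e}) :
    esdeg S v = esdeg T v := congrArg Set.ncard h

lemma esdeg_union {S T : Set (Sym2 V)} (hd : Disjoint S T) (hS : S.Finite) (hT : T.Finite)
    (v : V) : esdeg (S ∪ T) v = esdeg S v + esdeg T v := by
  unfold esdeg
  rw [show {e ∈ S ∪ T | v ∈ e} = {e ∈ S | v ∈ e} ∪ {e ∈ T | v ∈ e} by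
    ext e; simp only [Set.mem_setOf_eq, Set.mem_union]; tauto]
  exact Set.ncard_union_eq (hd.mono (Set.sep_subset _ _) (Set.sep_subset _ _))
    (hS.subset (Set.sep_subset _ _)) (hT.subset (Set.sep_subset _ _))

lemma esdeg_singleton_mem {e : Sym2 V} {v : V} (h : v ∈ e) : esdeg {e} v = 1 := by
  unfold esdeg
  rw [show {x ∈ ({e} : Set (Sym2 V)) | v ∈ x} = {e} by ext x; simp; rintro rfl; exact h]
  simp

lemma esdeg_singleton_not_mem {e : Sym2 V} {v : V} (h : v ∉ e) : esdeg {e} v = 0 := by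
  unfold esdeg
  rw [show {x ∈ ({e} : Set (Sym2 V)) | v ∈ x} = ∅ by ext x; simp; rintro rfl; exact h]
  simp

lemma esdeg_diff_singleton_mem {S : Set (Sym2 V)} (hS : S.Finite) {e : Sym2 V} {v : V}
    (heS : e ∈ S) (h : v ∈ e) : esdeg (S \ {e}) v + 1 = esdeg S v := by
  have hden : S = (S \ {e}) ∪ {e} := by
    ext x; simp only [Set.mem_union, Set.mem_diff, Set.mem_singleton_iff]
    by_cases hx : x = e <;> simp [hx, heS]
  conv_rhs => rw [hden]
  rw [esdeg_union (by simp) (hS.subset Set.diff_subset) (Set.finite_singleton _),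
    esdeg_singleton_mem h]

lemma esdeg_diff_singleton_not_mem {S : Set (Sym2 V)} {e : Sym2 V} {v : V}
    (h : v ∉ e) : esdeg (S \ {e}) v = esdeg S v := by
  apply esdeg_sep_congr
  ext x; simp only [Set.mem_setOf_eq, Set.mem_diff, Set.mem_singleton_iff]
  constructor
  · rintro ⟨⟨h1, _⟩, h2⟩; exact ⟨h1, h2⟩
  · rintro ⟨h1, h2⟩; exact ⟨⟨h1, fun he => h (he ▸ h2)⟩, h2⟩

lemma esdeg_map {W : Type} {f : V → W} (hf : Function.Injective f) (S : Set (Sym2 V)) (v : V) :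
    esdeg (Sym2.map f '' S) (f v) = esdeg S v := by
  unfold esdeg
  rw [show {e ∈ Sym2.map f '' S | f v ∈ e} = Sym2.map f '' {e ∈ S | v ∈ e} by
    ext e
    simp only [Set.mem_setOf_eq, Set.mem_image]
    constructor
    · rintro ⟨⟨x, hx, rfl⟩, hm⟩
      refine ⟨x, ⟨hx, ?_⟩, rfl⟩
      obtain ⟨y, hy, hyv⟩ := Sym2.mem_map.mp hm
      exact (hf hyv) ▸ hy
    · rintro ⟨x, ⟨hx, hm⟩, rfl⟩
      exact ⟨⟨x, hx, rfl⟩, Sym2.mem_map.mpr ⟨v, hm, rfl⟩⟩]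
  exact Set.ncard_image_of_injective _ (Sym2.map.injective hf)

lemma esdeg_map_not_mem {W : Type} {f : V → W} (S : Set (Sym2 V)) {w : W}
    (hw : w ∉ Set.range f) : esdeg (Sym2.map f '' S) w = 0 := by
  unfold esdeg
  rw [show {e ∈ Sym2.map f '' S | w ∈ e} = ∅ by
    ext e
    simp only [Set.mem_setOf_eq, Set.mem_image, Set.mem_empty_iff_false, iff_false, not_and]
    rintro ⟨x, _, rfl⟩ hm
    obtain ⟨y, _, rfl⟩ := Sym2.mem_map.mp hm
    exact hw ⟨y, rfl⟩]
  simp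

lemma esdeg_eq_ndeg_fromEdgeSet (S : Set (Sym2 V)) (hS : ∀ e ∈ S, ¬ e.IsDiag) (v : V) :
    esdeg S v = ndeg (fromEdgeSet S) v := by
  unfold esdeg ndeg
  rw [show {e ∈ S | v ∈ e} = (fun x => s(v, x)) '' ((fromEdgeSet S).neighborSet v) by
    ext e
    simp only [Set.mem_setOf_eq, Set.mem_image, mem_neighborSet, fromEdgeSet_adj]
    constructor
    · rintro ⟨heS, hv⟩
      refine ⟨Sym2.Mem.other hv, ⟨?_, ?_⟩, ?_⟩
      · rwa [Sym2.other_spec hv]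
      · intro hvo
        apply hS e heS
        rw [← Sym2.other_spec hv, ← hvo]
        exact Sym2.mk_isDiag_iff.mpr rfl
      · exact Sym2.other_spec hv
    · rintro ⟨x, ⟨hx, _⟩, rfl⟩
      exact ⟨hx, Sym2.mem_mk_left _ _⟩]
  rw [Set.ncard_image_of_injOn]
  intro a ha b hb hab
  have := Sym2.eq_iff.mp hab
  rcases this with ⟨_, h⟩ | ⟨h1, h2⟩
  · exact h
  · rw [← h1, h2]

lemma esdeg_eq_ndeg (G : SimpleGraph V) (v : V) : esdeg G.edgeSet v = ndeg G v := by
  rw [esdeg_eq_ndeg_fromEdgeSet _ (fun e he => G.not_isDiag_of_mem_edgeSet he),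
    fromEdgeSet_edgeSet]

end API

section Matching
variable {W : Type} {H : SimpleGraph W}

lemma two_neighbors {v : W} (h2 : ndeg H v = 2) :
    ∃ x y, x ≠ y ∧ H.neighborSet v = {x, y} := by
  obtain ⟨x, y, hxy, hset⟩ := Set.ncard_eq_two.mp h2
  exact ⟨x, y, hxy, hset⟩

lemma other_neighbor {v u : W} (h2 : ndeg H v = 2) (h : H.Adj v u) :
    ∃ z, z ≠ u ∧ H.neighborSet v = {u, z} := by
  obtain ⟨x, y, hxy, hset⟩ := two_neighbors h2
  have hu : u ∈ H.neighborSet v := h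
  rw [hset] at hu
  rcases hu with rfl | rfl
  · exact ⟨y, fun hc => hxy hc.symm, hset⟩
  · exact ⟨x, hxy, by rw [hset, Set.pair_comm]⟩

lemma closed_eq_univ (hc : H.Preconnected) {R : Set W} {v0 : W} (hv0 : v0 ∈ R)
    (hcl : ∀ a ∈ R, ∀ b, H.Adj a b → b ∈ R) : R = Set.univ := by
  have key : ∀ (u v : W), H.Walk u v → u ∈ R → v ∈ R := by
    intro u v p
    induction p with
    | nil => exact id
    | cons hadj _ ih => exact fun hu => ih (hcl _ hu _ hadj)
  ext v
  simp only [Set.mem_univ, iff_true]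
  exact key v0 v (hc v0 v).some hv0

lemma neighborSet_eq_of_subset [Finite W] {v : W} (h2 : ndeg H v = 2) {x y : W} (hxy : x ≠ y)
    (hx : H.Adj v x) (hy : H.Adj v y) : H.neighborSet v = {x, y} := by
  have hsub : ({x, y} : Set W) ⊆ H.neighborSet v := by
    rintro a (rfl | rfl); exacts [hx, hy]
  refine (Set.eq_of_subset_of_ncard_le hsub ?_ (Set.toFinite _)).symm
  rw [Set.ncard_pair hxy]
  exact h2.le

lemma induce_edge_map_mem {s : Set W} {e : Sym2 ↥s} (he : e ∈ (H.induce s).edgeSet) :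
    e.map Subtype.val ∈ H.edgeSet := by
  induction e with
  | _ a b =>
    rw [Sym2.map_pair_eq]
    exact he

theorem exists_matching_connected :
    ∀ (n : ℕ) (W : Type), Finite W → ∀ (H : SimpleGraph W), Nat.card W = n →
      H.Connected → (∀ w, ndeg H w = 2) → Even n →
      ∃ A ⊆ H.edgeSet, ∀ w, esdeg A w = 1 := by
  intro n
  induction n using Nat.strong_induction_on with
  | _ n IH =>
  intro W hfinW H hcard hconn h2 heven
  obtain ⟨w0⟩ := hconn.nonempty
  obtain ⟨x, y, hxy, hnb0⟩ := two_neighbors (h2 w0)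
  have hadjx : H.Adj w0 x := by
    have : x ∈ H.neighborSet w0 := by rw [hnb0]; exact Set.mem_insert _ _
    exact this
  have hadjy : H.Adj w0 y := by
    have : y ∈ H.neighborSet w0 := by rw [hnb0]; exact Set.mem_insert_of_mem _ rfl
    exact this
  obtain ⟨z, hzw0, hnbx⟩ := other_neighbor (h2 x) hadjx.symm
  have hadjxz : H.Adj x z := by
    have : z ∈ H.neighborSet x := by rw [hnbx]; exact Set.mem_insert_of_mem _ rfl
    exact this
  have hxw0 : x ≠ w0 := hadjx.ne'
  have hyw0 : y ≠ w0 := hadjy.ne'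
  have hzx : z ≠ x := hadjxz.ne'
  have hnbadj0 : ∀ b, H.Adj w0 b → b = x ∨ b = y := by
    intro b hb
    have : b ∈ H.neighborSet w0 := hb
    rw [hnb0] at this
    exact this
  have hnbadjx : ∀ b, H.Adj x b → b = w0 ∨ b = z := by
    intro b hb
    have : b ∈ H.neighborSet x := hb
    rw [hnbx] at this
    exact this
  by_cases hzy : z = y
  · -- triangle component: contradiction with evenness
    exfalso
    have hadjyz : H.Adj y x := by rw [← hzy]; exact hadjxz.symm
    have hnby : H.neighborSet y = {w0, x} := neighborSet_eq_of_subset (h2 y) hxw0.symm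
      hadjy.symm hadjyz
    have hR : ({w0, x, y} : Set W) = Set.univ := by
      refine closed_eq_univ hconn.preconnected (Set.mem_insert _ _) ?_
      rintro a (rfl | rfl | rfl) b hb
      · rcases hnbadj0 b hb with rfl | rfl
        · exact Set.mem_insert_of_mem _ (Set.mem_insert _ _)
        · exact Set.mem_insert_of_mem _ (Set.mem_insert_of_mem _ rfl)
      · rcases hnbadjx b hb with rfl | rfl
        · exact Set.mem_insert _ _
        · exact Set.mem_insert_of_mem _ (Set.mem_insert_of_mem _ hzy)
      · have hmem : b ∈ ({w0, x} : Set W) := by rw [← hnby]; exact hb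
        rcases hmem with rfl | rfl
        · exact Set.mem_insert _ _
        · exact Set.mem_insert_of_mem _ (Set.mem_insert _ _)
    have hn3 : n = 3 := by
      rw [← hcard, ← Set.ncard_univ, ← hR,
        Set.ncard_insert_of_notMem (by simp [hxw0.symm, hyw0.symm]) (Set.toFinite _),
        Set.ncard_pair hxy]
    rw [hn3, Nat.even_iff] at heven
    omega
  · by_cases hyz : H.Adj y z
    · -- 4-cycle component: explicit matching
      have hyz' : y ≠ z := fun h => hzy h.symm
      have hw0y : w0 ≠ y := hadjy.ne
      have hw0z : w0 ≠ z := fun h => hzw0 h.symm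
      have hw0x : w0 ≠ x := hadjx.ne
      have hxz : x ≠ z := fun h => hzx h.symm
      have hnby : H.neighborSet y = {w0, z} := neighborSet_eq_of_subset (h2 y) hw0z
        hadjy.symm hyz
      have hnbz : H.neighborSet z = {x, y} := neighborSet_eq_of_subset (h2 z) hxy
        hadjxz.symm hyz.symm
      have hR : ({w0, x, y, z} : Set W) = Set.univ := by
        refine closed_eq_univ hconn.preconnected (Set.mem_insert _ _) ?_
        intro a ha b hb
        rcases ha with ha | ha | ha | ha
        · rw [ha] at hb
          rcases hnbadj0 b hb with h | h <;> simp [h]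
        · rw [ha] at hb
          rcases hnbadjx b hb with h | h <;> simp [h]
        · rw [ha] at hb
          have hmem : b ∈ ({w0, z} : Set W) := by rw [← hnby]; exact hb
          rcases hmem with h | h
          · simp [h]
          · rw [Set.mem_singleton_iff] at h; simp [h]
        · rw [Set.mem_singleton_iff] at ha
          rw [ha] at hb
          have hmem : b ∈ ({x, y} : Set W) := by rw [← hnbz]; exact hb
          rcases hmem with h | h
          · simp [h]
          · rw [Set.mem_singleton_iff] at h; simp [h]
      have hne : s(w0, x) ≠ s(y, z) := by
        intro hcon
        rw [Sym2.eq_iff] at hcon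
        rcases hcon with ⟨h1, _⟩ | ⟨h1, _⟩
        · exact hw0y h1
        · exact hw0z h1
      refine ⟨{s(w0, x)} ∪ {s(y, z)}, ?_, ?_⟩
      · rintro e (rfl | rfl)
        · exact hadjx
        · exact hyz
      · intro w
        have hw : w ∈ ({w0, x, y, z} : Set W) := by rw [hR]; trivial
        rw [esdeg_union (Set.disjoint_singleton_left.mpr (by simp [hne]))
          (Set.finite_singleton _) (Set.finite_singleton _)]
        rcases hw with h | h | h | h
        · rw [h, esdeg_singleton_mem (by simp), esdeg_singleton_not_mem
            (by simp [Sym2.mem_iff, hw0y, hw0z])]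
        · rw [h, esdeg_singleton_mem (by simp), esdeg_singleton_not_mem
            (by simp [Sym2.mem_iff, hxy, hxz])]
        · rw [h, esdeg_singleton_not_mem (by simp [Sym2.mem_iff, Ne.symm hw0y, Ne.symm hxy]),
            esdeg_singleton_mem (by simp)]
        · rw [Set.mem_singleton_iff] at h
          rw [h, esdeg_singleton_not_mem (by simp [Sym2.mem_iff, Ne.symm hw0z, Ne.symm hxz]),
            esdeg_singleton_mem (by simp)]
    · -- main case: contract the path y - w0 - x - z
      have hyz2 : y ≠ z := fun h => hzy h.symm
      obtain ⟨u, huw0, hnby⟩ := other_neighbor (h2 y) hadjy.symm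
      have hadjyu : H.Adj y u := by
        have : u ∈ H.neighborSet y := by rw [hnby]; exact Set.mem_insert_of_mem _ rfl
        exact this
      obtain ⟨t, htx, hnbz⟩ := other_neighbor (h2 z) hadjxz.symm
      have hadjzt : H.Adj z t := by
        have : t ∈ H.neighborSet z := by rw [hnbz]; exact Set.mem_insert_of_mem _ rfl
        exact this
      have hnbadjy : ∀ b, H.Adj y b → b = w0 ∨ b = u := by
        intro b hb
        have : b ∈ H.neighborSet y := hb
        rw [hnby] at this
        exact this
      have hnbadjz : ∀ b, H.Adj z b → b = x ∨ b = t := by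
        intro b hb
        have : b ∈ H.neighborSet z := hb
        rw [hnbz] at this
        exact this
      have hux : u ≠ x := by
        intro h
        rw [h] at hadjyu
        rcases hnbadjx y hadjyu.symm with h' | h'
        · exact hyw0 h'
        · exact hzy h'.symm
      have huz : u ≠ z := fun h => hyz (h ▸ hadjyu)
      have htw0 : t ≠ w0 := by
        intro h
        rw [h] at hadjzt
        rcases hnbadj0 z hadjzt.symm with h' | h'
        · exact hzx h'
        · exact hzy h'
      have hty : t ≠ y := by
        intro h
        rw [h] at hadjzt
        exact hyz hadjzt.symm
      set s : Set W := {w0, x}ᶜ with hs_def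
      have hmem_s : ∀ w : W, w ≠ w0 → w ≠ x → w ∈ s := by
        intro w h1 h2
        rw [hs_def]
        simp only [Set.mem_compl_iff, Set.mem_insert_iff, Set.mem_singleton_iff]
        push_neg
        exact ⟨h1, h2⟩
      have hsplit : ∀ b : ↥s, b.1 ≠ w0 ∧ b.1 ≠ x := by
        intro b
        have hb : (b : W) ∈ ({w0, x}ᶜ : Set W) := b.2
        simp only [Set.mem_compl_iff, Set.mem_insert_iff, Set.mem_singleton_iff] at hb
        push_neg at hb
        exact hb
      have hy_s : y ∈ s := hmem_s y hyw0 (Ne.symm hxy)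
      have hz_s : z ∈ s := hmem_s z hzw0 hzx
      have hu_s : u ∈ s := hmem_s u huw0 hux
      have ht_s : t ∈ s := hmem_s t htw0 htx
      have hw0ns : w0 ∉ s := fun h => (hsplit ⟨w0, h⟩).1 rfl
      have hxns : x ∉ s := fun h => (hsplit ⟨x, h⟩).2 rfl
      set y' : ↥s := ⟨y, hy_s⟩ with hy'_def
      set z' : ↥s := ⟨z, hz_s⟩ with hz'_def
      have hy'z' : y' ≠ z' := fun h => hyz2 (congrArg Subtype.val h)
      set H' : SimpleGraph ↥s := H.induce s ⊔ edge y' z' with hH'_def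
      have hadj' : ∀ a b : ↥s,
          H'.Adj a b ↔ (H.Adj a.1 b.1 ∨ ((a = y' ∧ b = z') ∨ (a = z' ∧ b = y'))) := by
        intro a b
        rw [hH'_def, sup_adj, edge_adj]
        constructor
        · rintro (h | ⟨h, -⟩)
          · exact Or.inl h
          · exact Or.inr h
        · rintro (h | h)
          · exact Or.inl h
          · refine Or.inr ⟨h, ?_⟩
            rcases h with ⟨rfl, rfl⟩ | ⟨rfl, rfl⟩
            · exact hy'z'
            · exact hy'z'.symm
      have hval_inj : Function.Injective (Subtype.val : ↥s → W) := Subtype.val_injective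
      have hndeg' : ∀ a : ↥s, ndeg H' a = 2 := by
        intro a
        by_cases hay : a = y'
        · have hset : H'.neighborSet a = {⟨u, hu_s⟩, z'} := by
            ext b
            rw [mem_neighborSet, hadj' a b]
            constructor
            · intro hb
              rcases hb with h | ⟨h1, h2⟩ | ⟨h1, h2⟩
              · have h' : H.Adj y b.1 := by
                  rw [← show a.1 = y from congrArg Subtype.val hay]
                  exact h
                rcases hnbadjy b.1 h' with hb' | hb'
                · exact absurd hb' (hsplit b).1
                · left; exact Subtype.ext hb'
              · right; rw [h2]; rfl
              · exact absurd (hay.symm.trans h1) hy'z'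
            · intro hb
              rcases hb with hb | hb
              · refine Or.inl ?_
                rw [hay, hb]
                exact hadjyu
              · rw [Set.mem_singleton_iff] at hb
                exact Or.inr (Or.inl ⟨hay, hb⟩)
          rw [ndeg, hset, Set.ncard_pair (fun hcon => huz (congrArg Subtype.val hcon))]
        · by_cases haz : a = z'
          · have hset : H'.neighborSet a = {⟨t, ht_s⟩, y'} := by
              ext b
              rw [mem_neighborSet, hadj' a b]
              constructor
              · intro hb
                rcases hb with h | ⟨h1, h2⟩ | ⟨h1, h2⟩
                · have h' : H.Adj z b.1 := by
                    rw [← show a.1 = z from congrArg Subtype.val haz]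
                    exact h
                  rcases hnbadjz b.1 h' with hb' | hb'
                  · exact absurd hb' (hsplit b).2
                  · left; exact Subtype.ext hb'
                · exact absurd h1 hay
                · right; rw [h2]; rfl
              · intro hb
                rcases hb with hb | hb
                · refine Or.inl ?_
                  rw [haz, hb]
                  exact hadjzt
                · rw [Set.mem_singleton_iff] at hb
                  exact Or.inr (Or.inr ⟨haz, hb⟩)
            rw [ndeg, hset, Set.ncard_pair
              (fun hcon => hty (congrArg Subtype.val hcon))]
          · have himg : Subtype.val '' (H'.neighborSet a) = H.neighborSet a.1 := by
              ext c
              simp only [Set.mem_image, mem_neighborSet]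
              constructor
              · rintro ⟨b, hb, rfl⟩
                rw [hadj' a b] at hb
                rcases hb with h | ⟨h1, -⟩ | ⟨h1, -⟩
                · exact h
                · exact absurd h1 hay
                · exact absurd h1 haz
              · intro hc
                have hcw0 : c ≠ w0 := by
                  intro h
                  rw [h] at hc
                  rcases hnbadj0 a.1 hc.symm with h' | h'
                  · exact (hsplit a).2 h'
                  · exact hay (Subtype.ext h')
                have hcx : c ≠ x := by
                  intro h
                  rw [h] at hc
                  rcases hnbadjx a.1 hc.symm with h' | h'
                  · exact (hsplit a).1 h'
                  · exact haz (Subtype.ext h')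
                exact ⟨⟨c, hmem_s c hcw0 hcx⟩, (hadj' a _).mpr (Or.inl hc), rfl⟩
            have hcardeq := congrArg Set.ncard himg
            rw [Set.ncard_image_of_injective _ hval_inj] at hcardeq
            rw [ndeg, hcardeq]
            exact h2 a.1
      have hadj_yz' : H'.Adj y' z' := (hadj' y' z').mpr (Or.inr (Or.inl ⟨rfl, rfl⟩))
      have hR : ({w0, x} ∪ {w | ∃ hw : w ∈ s, H'.Reachable y' ⟨w, hw⟩} : Set W)
          = Set.univ := by
        refine closed_eq_univ hconn.preconnected
          (Or.inr ⟨hy_s, Reachable.refl y'⟩ : y ∈ _) ?_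
        intro a ha b hb
        rcases ha with ha | ⟨has, har⟩
        · rcases ha with ha | ha
          · rw [ha] at hb
            rcases hnbadj0 b hb with h | h
            · left; rw [h]; exact Set.mem_insert_of_mem _ rfl
            · right; rw [h]; exact ⟨hy_s, Reachable.refl y'⟩
          · rw [Set.mem_singleton_iff] at ha
            rw [ha] at hb
            rcases hnbadjx b hb with h | h
            · left; rw [h]; exact Set.mem_insert _ _
            · right; rw [h]; exact ⟨hz_s, hadj_yz'.reachable⟩
        · by_cases hbw0 : b = w0
          · left; rw [hbw0]; exact Set.mem_insert _ _
          · by_cases hbx : b = x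
            · left; rw [hbx]; exact Set.mem_insert_of_mem _ rfl
            · have hbs : b ∈ s := hmem_s b hbw0 hbx
              refine Or.inr ⟨hbs, har.trans ?_⟩
              exact ((hadj' ⟨a, has⟩ ⟨b, hbs⟩).mpr (Or.inl hb)).reachable
      have hreach : ∀ a : ↥s, H'.Reachable y' a := by
        intro a
        have hmem : a.1 ∈ ({w0, x} ∪ {w | ∃ hw : w ∈ s, H'.Reachable y' ⟨w, hw⟩} : Set W) := by
          rw [hR]; trivial
        rcases hmem with h | ⟨hw, hr⟩
        · exfalso
          rcases h with h | h
          · exact (hsplit a).1 h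
          · exact (hsplit a).2 (Set.mem_singleton_iff.mp h)
        · exact hr
      have hconn' : H'.Connected := by
        rw [connected_iff]
        exact ⟨fun a b => (hreach a).symm.trans (hreach b), ⟨y'⟩⟩
      have hw0x : w0 ≠ x := hadjx.ne
      have hn2 : (2 : ℕ) ≤ n := by
        rw [← hcard, ← Set.ncard_univ]
        calc (2 : ℕ) = ({w0, x} : Set W).ncard := (Set.ncard_pair hw0x).symm
          _ ≤ _ := Set.ncard_le_ncard (Set.subset_univ _) (Set.toFinite _)
      have hcards : Nat.card ↥s = n - 2 := by
        rw [Nat.card_coe_set_eq, hs_def, Set.compl_eq_univ_diff,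
          Set.ncard_diff (Set.subset_univ _) (Set.toFinite _), Set.ncard_univ, hcard,
          Set.ncard_pair hw0x]
      have heven' : Even (n - 2) := by
        obtain ⟨k, hk⟩ := heven
        exact ⟨k - 1, by omega⟩
      obtain ⟨A', hA'sub, hA'deg⟩ := IH (n - 2) (by omega) ↥s inferInstance H' hcards
        hconn' hndeg' heven'
      set eyz : Sym2 ↥s := s(y', z') with heyz_def
      have hA'fin : A'.Finite := Set.toFinite _
      have hedge' : H'.edgeSet = (H.induce s).edgeSet ∪ {eyz} := by
        rw [hH'_def, edgeSet_sup, edge_edgeSet_of_ne hy'z']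
      have hA0subE : ∀ e ∈ A', e ≠ eyz → e.map Subtype.val ∈ H.edgeSet := by
        intro e he hne
        have hmem := hA'sub he
        rw [hedge'] at hmem
        rcases hmem with h | h
        · exact induce_edge_map_mem h
        · exact absurd (Set.mem_singleton_iff.mp h) hne
      set A0 : Set (Sym2 W) := Sym2.map Subtype.val '' (A' \ {eyz}) with hA0_def
      have hA0mem : ∀ e ∈ A0, ∀ w ∈ e, w ∈ s := by
        rintro e ⟨e', -, rfl⟩ w hw
        obtain ⟨b, -, rfl⟩ := Sym2.mem_map.mp hw
        exact b.2
      have hA0E : A0 ⊆ H.edgeSet := by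
        rintro e ⟨e', ⟨he1, he2⟩, rfl⟩
        exact hA0subE e' he1 (fun h => he2 (Set.mem_singleton_iff.mpr h))
      have hesdegA0 : ∀ (w : W) (hw : w ∈ s), esdeg A0 w = esdeg (A' \ {eyz}) ⟨w, hw⟩ := by
        intro w hw
        exact esdeg_map hval_inj _ ⟨w, hw⟩
      have hesdegA0w0 : esdeg A0 w0 = 0 :=
        esdeg_map_not_mem _ (by rw [Subtype.range_coe]; exact hw0ns)
      have hesdegA0x : esdeg A0 x = 0 :=
        esdeg_map_not_mem _ (by rw [Subtype.range_coe]; exact hxns)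
      have hA0fin : A0.Finite := (hA'fin.diff).image _
      by_cases hin : eyz ∈ A'
      · refine ⟨A0 ∪ ({s(y, w0)} ∪ {s(x, z)}), ?_, ?_⟩
        · rintro e (he | he | he)
          · exact hA0E he
          · rw [Set.mem_singleton_iff] at he
            rw [he]
            exact hadjy.symm
          · rw [Set.mem_singleton_iff] at he
            rw [he]
            exact hadjxz
        · intro w
          have hd1 : Disjoint A0 ({s(y, w0)} ∪ {s(x, z)} : Set (Sym2 W)) := by
            rw [Set.disjoint_left]
            rintro e he (h | h) <;> rw [Set.mem_singleton_iff] at h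
            · exact hw0ns (hA0mem e he w0 (by rw [h]; exact Sym2.mem_mk_right _ _))
            · exact hxns (hA0mem e he x (by rw [h]; exact Sym2.mem_mk_left _ _))
          have hd2 : Disjoint ({s(y, w0)} : Set (Sym2 W)) {s(x, z)} := by
            rw [Set.disjoint_singleton_left, Set.mem_singleton_iff]
            intro h
            rw [Sym2.eq_iff] at h
            rcases h with ⟨h1, -⟩ | ⟨-, h2⟩
            · exact hxy h1.symm
            · exact hw0x h2
          rw [esdeg_union hd1 hA0fin ((Set.finite_singleton _).union (Set.finite_singleton _)),
            esdeg_union hd2 (Set.finite_singleton _) (Set.finite_singleton _)]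
          by_cases hww0 : w = w0
          · rw [hww0, hesdegA0w0, esdeg_singleton_mem (Sym2.mem_mk_right _ _),
              esdeg_singleton_not_mem
                (by rw [Sym2.mem_iff]; push_neg; exact ⟨hw0x, Ne.symm hzw0⟩)]
          · by_cases hwx : w = x
            · rw [hwx, hesdegA0x,
                esdeg_singleton_not_mem
                  (by rw [Sym2.mem_iff]; push_neg; exact ⟨hxy, hxw0⟩),
                esdeg_singleton_mem (Sym2.mem_mk_left _ _)]
            · have hws : w ∈ s := hmem_s w hww0 hwx
              rw [hesdegA0 w hws]
              by_cases hwy : w = y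
              · have hmemy : (⟨w, hws⟩ : ↥s) ∈ eyz := by
                  rw [heyz_def, Sym2.mem_iff]
                  exact Or.inl (Subtype.ext hwy)
                have h1 := esdeg_diff_singleton_mem hA'fin hin hmemy
                rw [hA'deg ⟨w, hws⟩] at h1
                rw [show esdeg (A' \ {eyz}) ⟨w, hws⟩ = 0 by omega,
                  esdeg_singleton_mem (by rw [hwy]; exact Sym2.mem_mk_left _ _),
                  esdeg_singleton_not_mem (by
                    rw [Sym2.mem_iff]; push_neg
                    exact ⟨hwy ▸ Ne.symm hxy, hwy ▸ hyz2⟩)]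
              · by_cases hwz : w = z
                · have hmemz : (⟨w, hws⟩ : ↥s) ∈ eyz := by
                    rw [heyz_def, Sym2.mem_iff]
                    exact Or.inr (Subtype.ext hwz)
                  have h1 := esdeg_diff_singleton_mem hA'fin hin hmemz
                  rw [hA'deg ⟨w, hws⟩] at h1
                  rw [show esdeg (A' \ {eyz}) ⟨w, hws⟩ = 0 by omega,
                    esdeg_singleton_not_mem (by
                      rw [Sym2.mem_iff]; push_neg
                      exact ⟨hwz ▸ hzy, hwz ▸ hzw0⟩),
                    esdeg_singleton_mem (by rw [hwz]; exact Sym2.mem_mk_right _ _)]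
                · have hnm : (⟨w, hws⟩ : ↥s) ∉ eyz := by
                    rw [heyz_def, Sym2.mem_iff]
                    push_neg
                    constructor
                    · exact fun h => hwy (congrArg Subtype.val h)
                    · exact fun h => hwz (congrArg Subtype.val h)
                  rw [esdeg_diff_singleton_not_mem hnm, hA'deg,
                    esdeg_singleton_not_mem (by
                      rw [Sym2.mem_iff]; push_neg; exact ⟨hwy, hww0⟩),
                    esdeg_singleton_not_mem (by
                      rw [Sym2.mem_iff]; push_neg; exact ⟨hwx, hwz⟩)]
      · have hdiffeq : A' \ {eyz} = A' := Set.diff_singleton_eq_self hin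
        refine ⟨A0 ∪ {s(w0, x)}, ?_, ?_⟩
        · rintro e (he | he)
          · exact hA0E he
          · rw [Set.mem_singleton_iff] at he
            rw [he]
            exact hadjx
        · intro w
          have hd1 : Disjoint A0 ({s(w0, x)} : Set (Sym2 W)) := by
            rw [Set.disjoint_left]
            rintro e he h
            rw [Set.mem_singleton_iff] at h
            exact hw0ns (hA0mem e he w0 (by rw [h]; exact Sym2.mem_mk_left _ _))
          rw [esdeg_union hd1 hA0fin (Set.finite_singleton _)]
          by_cases hww0 : w = w0
          · rw [hww0, hesdegA0w0, esdeg_singleton_mem (Sym2.mem_mk_left _ _)]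
          · by_cases hwx : w = x
            · rw [hwx, hesdegA0x, esdeg_singleton_mem (Sym2.mem_mk_right _ _)]
            · have hws : w ∈ s := hmem_s w hww0 hwx
              rw [hesdegA0 w hws, hdiffeq, hA'deg,
                esdeg_singleton_not_mem (by
                  rw [Sym2.mem_iff]; push_neg; exact ⟨hww0, hwx⟩)]
end Matching

section Components
variable {W : Type} {H : SimpleGraph W}

lemma reachable_induce_supp (C : H.ConnectedComponent) :
    ∀ (u v : W) (p : H.Walk u v) (hu : u ∈ C.supp) (hv : v ∈ C.supp),
      (H.induce C.supp).Reachable ⟨u, hu⟩ ⟨v, hv⟩ := by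
  intro u v p
  induction p with
  | nil => intro hu hv; exact Reachable.refl _
  | @cons a m c h q ih =>
    intro hu hv
    have hm : m ∈ C.supp := by
      rw [ConnectedComponent.mem_supp_iff] at hu ⊢
      rw [← hu]
      exact ConnectedComponent.sound h.symm.reachable
    have hadj : (H.induce C.supp).Adj ⟨a, hu⟩ ⟨m, hm⟩ := h
    exact hadj.reachable.trans (ih hm hv)

theorem exists_matching [Finite W] (H : SimpleGraph W)
    (h2 : ∀ w, ndeg H w = 2)
    (hev : ∀ w, Even ((H.connectedComponentMk w).supp.ncard)) :
    ∃ A ⊆ H.edgeSet, ∀ w, esdeg A w = 1 := by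
  have hex : ∀ C : H.ConnectedComponent,
      ∃ A ⊆ (H.induce C.supp).edgeSet, ∀ a, esdeg A a = 1 := by
    intro C
    have himg : ∀ a : ↥C.supp,
        Subtype.val '' ((H.induce C.supp).neighborSet a) = H.neighborSet a.1 := by
      intro a
      ext c
      simp only [Set.mem_image, mem_neighborSet]
      constructor
      · rintro ⟨b, hb, rfl⟩
        exact hb
      · intro hc
        have hcs : c ∈ C.supp := by
          rw [ConnectedComponent.mem_supp_iff]
          rw [← (ConnectedComponent.mem_supp_iff C a.1).mp a.2]
          exact ConnectedComponent.sound hc.symm.reachable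
        exact ⟨⟨c, hcs⟩, hc, rfl⟩
    have hdeg : ∀ a : ↥C.supp, ndeg (H.induce C.supp) a = 2 := by
      intro a
      have hcardeq := congrArg Set.ncard (himg a)
      rw [Set.ncard_image_of_injective _ Subtype.val_injective] at hcardeq
      rw [ndeg, hcardeq]
      exact h2 a.1
    obtain ⟨v, hv⟩ := C.exists_rep
    have hvs : v ∈ C.supp := by rw [ConnectedComponent.mem_supp_iff]; exact hv
    have hconn : (H.induce C.supp).Connected := by
      rw [connected_iff]
      refine ⟨fun a b => ?_, ⟨⟨v, hvs⟩⟩⟩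
      have hreach : H.Reachable a.1 b.1 := by
        apply ConnectedComponent.exact
        rw [(ConnectedComponent.mem_supp_iff C a.1).mp a.2,
          (ConnectedComponent.mem_supp_iff C b.1).mp b.2]
      obtain ⟨p⟩ := hreach
      have := reachable_induce_supp C a.1 b.1 p a.2 b.2
      convert this <;> exact (Subtype.eta _ _).symm
    have hevC : Even (Nat.card ↥C.supp) := by
      rw [Nat.card_coe_set_eq]
      obtain ⟨w, hw⟩ := C.exists_rep
      rw [← hw]
      exact hev w
    exact exists_matching_connected (Nat.card ↥C.supp) ↥C.supp inferInstance
      (H.induce C.supp) rfl hconn hdeg hevC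
  choose f hf1 hf2 using hex
  refine ⟨⋃ C, Sym2.map Subtype.val '' (f C), ?_, ?_⟩
  · rintro e he
    obtain ⟨C, he⟩ := Set.mem_iUnion.mp he
    obtain ⟨e', he', rfl⟩ := he
    exact induce_edge_map_mem (hf1 C he')
  · intro w
    have hws : w ∈ (H.connectedComponentMk w).supp := by
      rw [ConnectedComponent.mem_supp_iff]
    have hkey : {e ∈ ⋃ C, Sym2.map Subtype.val '' (f C) | w ∈ e}
        = {e ∈ Sym2.map Subtype.val '' (f (H.connectedComponentMk w)) | w ∈ e} := by
      ext e
      simp only [Set.mem_setOf_eq, Set.mem_iUnion]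
      constructor
      · rintro ⟨⟨C, hC⟩, hw⟩
        obtain ⟨e', he', rfl⟩ := hC
        obtain ⟨b, hb, rfl⟩ := Sym2.mem_map.mp hw
        have hCC : H.connectedComponentMk b.1 = C := (ConnectedComponent.mem_supp_iff C b.1).mp b.2
        rw [hCC]
        exact ⟨⟨e', he', rfl⟩, Sym2.mem_map.mpr ⟨b, hb, rfl⟩⟩
      · rintro ⟨h1, h2⟩
        exact ⟨⟨_, h1⟩, h2⟩
    rw [esdeg_sep_congr hkey]
    have := esdeg_map (Subtype.val_injective) (f (H.connectedComponentMk w)) ⟨w, hws⟩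
    rw [this]
    exact hf2 _ _
end Components

section Pprop

def IsEvenEdgeSetAux {V : Type} (S : Set (Sym2 V)) : Prop := ∀ v, Even (esdeg S v)

def Pprop {α : Type} (G : SimpleGraph α) (ℓ : Sym2 α → Prop) : Prop :=
  ∃ A B : Set (Sym2 α), G.edgeSet.Finite ∧ A ∪ B = {e ∈ G.edgeSet | ¬ ℓ e} ∧ Disjoint A B ∧
    IsEvenEdgeSetAux ({e ∈ G.edgeSet | ℓ e} ∪ A) ∧
    IsEvenEdgeSetAux ({e ∈ G.edgeSet | ℓ e} ∪ B)

lemma Pprop_of_even_two_factor {W : Type} [Finite W] (Q : SimpleGraph W) (ℓ : Sym2 W → Prop)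
    (hcub : ∀ w, ndeg Q w = 3)
    (hdeg2 : ∀ w, esdeg {e ∈ Q.edgeSet | ¬ ℓ e} w = 2)
    (hev : ∀ w, Even (((fromEdgeSet {e ∈ Q.edgeSet | ¬ ℓ e}).connectedComponentMk w).supp.ncard)) :
    Pprop Q ℓ := by
  set F := {e ∈ Q.edgeSet | ¬ ℓ e} with hF_def
  set L := {e ∈ Q.edgeSet | ℓ e} with hL_def
  have hFnd : ∀ e ∈ F, ¬ e.IsDiag := fun e he => Q.not_isDiag_of_mem_edgeSet he.1
  have h2 : ∀ w, ndeg (fromEdgeSet F) w = 2 := fun w => by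
    rw [← esdeg_eq_ndeg_fromEdgeSet F hFnd w]; exact hdeg2 w
  obtain ⟨A, hAsub, hAdeg⟩ := exists_matching (fromEdgeSet F) h2 hev
  have hAF : A ⊆ F := hAsub.trans (by rw [edgeSet_fromEdgeSet]; exact Set.diff_subset)
  have hLdisj : Disjoint L F := by
    rw [Set.disjoint_left]
    rintro e ⟨-, h1⟩ ⟨-, h2⟩
    exact h2 h1
  have hsplitE : L ∪ F = Q.edgeSet := by
    ext e
    simp only [hL_def, hF_def, Set.mem_union, Set.mem_setOf_eq]
    by_cases h : ℓ e <;> by_cases he : e ∈ Q.edgeSet <;> simp [h, he]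
  have hL1 : ∀ v, esdeg L v = 1 := by
    intro v
    have hu := esdeg_union hLdisj (Set.toFinite _) (Set.toFinite _) v
    rw [hsplitE, esdeg_eq_ndeg, hcub, hdeg2] at hu
    omega
  have hFA : esdeg F = fun v => esdeg A v + esdeg (F \ A) v := by
    funext v
    rw [← esdeg_union Set.disjoint_sdiff_right (Set.toFinite _) (Set.toFinite _),
      Set.union_diff_cancel hAF]
  refine ⟨A, F \ A, Set.toFinite _, Set.union_diff_cancel hAF, Set.disjoint_sdiff_right, ?_, ?_⟩
  · intro v
    rw [esdeg_union (hLdisj.mono_right hAF) (Set.toFinite _) (Set.toFinite _), hL1, hAdeg]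
    exact ⟨1, rfl⟩
  · intro v
    have hBA : esdeg (F \ A) v = 1 := by
      have := congrFun hFA v
      rw [hdeg2, hAdeg] at this
      omega
    rw [esdeg_union (hLdisj.mono_right Set.diff_subset) (Set.toFinite _) (Set.toFinite _),
      hL1, hBA]
    exact ⟨1, rfl⟩

end Pprop


end CDC

namespace CDC
open SimpleGraph

section Transfer
variable {α α' : Type}

lemma isEven_image {β γ : Type} {g : β → γ} (hg : Function.Injective g) {S : Set (Sym2 β)}
    (hS : ∀ v, Even (esdeg S v)) : ∀ w, Even (esdeg (Sym2.map g '' S) w) := by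
  intro w
  by_cases hw : w ∈ Set.range g
  · obtain ⟨v, rfl⟩ := hw
    rw [esdeg_map hg]
    exact hS v
  · rw [esdeg_map_not_mem _ hw]
    exact Even.zero

lemma sym2_map_comp_symm (f : α ≃ α') (e : Sym2 α') :
    Sym2.map f (Sym2.map f.symm e) = e := by
  rw [Sym2.map_map]
  have hcomp : (⇑f ∘ ⇑f.symm) = id := funext fun x => f.apply_symm_apply x
  rw [hcomp, Sym2.map_id]
  rfl

lemma mem_edgeSet_iso {G : SimpleGraph α} {G' : SimpleGraph α'} (f : G ≃g G') (e : Sym2 α) :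
    Sym2.map f e ∈ G'.edgeSet ↔ e ∈ G.edgeSet := by
  induction e with
  | _ a b =>
    rw [Sym2.map_pair_eq, mem_edgeSet, mem_edgeSet]
    exact f.map_adj_iff

lemma edgeSet_iso_image {G : SimpleGraph α} {G' : SimpleGraph α'} (f : G ≃g G') :
    G'.edgeSet = Sym2.map f '' G.edgeSet := by
  ext e
  constructor
  · intro he
    refine ⟨Sym2.map f.symm e, ?_, sym2_map_comp_symm f.toEquiv e⟩
    rw [← mem_edgeSet_iso f]
    rw [show Sym2.map ⇑f (Sym2.map ⇑f.symm e) = e from sym2_map_comp_symm f.toEquiv e]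
    exact he
  · rintro ⟨e0, he0, rfl⟩
    exact (mem_edgeSet_iso f e0).mpr he0

lemma Pprop_iso {G : SimpleGraph α} {G' : SimpleGraph α'}
    {ℓ : Sym2 α → Prop} {ℓ' : Sym2 α' → Prop} (f : G ≃g G')
    (hf : ∀ e ∈ G.edgeSet, ℓ e = ℓ' (Sym2.map f e)) (hP : Pprop G ℓ) : Pprop G' ℓ' := by
  obtain ⟨A, B, hfin, hun, hdisj, hevA, hevB⟩ := hP
  have hinj : Function.Injective (⇑f : α → α') := f.toEquiv.injective
  have himgE : G'.edgeSet = Sym2.map ⇑f '' G.edgeSet := edgeSet_iso_image f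
  have claim : ∀ p : Prop → Prop,
      {e ∈ G'.edgeSet | p (ℓ' e)} = Sym2.map ⇑f '' {e ∈ G.edgeSet | p (ℓ e)} := by
    intro p
    ext e
    simp only [Set.mem_setOf_eq, Set.mem_image]
    constructor
    · rintro ⟨he, hp⟩
      rw [himgE] at he
      obtain ⟨e0, he0, rfl⟩ := he
      exact ⟨e0, ⟨he0, by rw [hf e0 he0]; exact hp⟩, rfl⟩
    · rintro ⟨e0, ⟨he0, hp⟩, rfl⟩
      refine ⟨by rw [himgE]; exact ⟨e0, he0, rfl⟩, by rw [← hf e0 he0]; exact hp⟩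
  refine ⟨Sym2.map ⇑f '' A, Sym2.map ⇑f '' B, ?_, ?_, ?_, ?_, ?_⟩
  · rw [himgE]
    exact hfin.image _
  · rw [← Set.image_union, hun]
    exact (claim (fun q => ¬ q)).symm
  · exact Set.disjoint_image_of_injective (Sym2.map.injective hinj) hdisj
  · intro w
    rw [claim (fun q => q), ← Set.image_union]
    exact isEven_image hinj (fun x => hevA x) w
  · intro w
    rw [claim (fun q => q), ← Set.image_union]
    exact isEven_image hinj (fun x => hevB x) w

lemma none_not_mem_map_some (e0 : Sym2 α) : (none : Option α) ∉ Sym2.map some e0 := by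
  intro h
  obtain ⟨y, -, hy⟩ := Sym2.mem_map.mp h
  exact nomatch hy

lemma extendLabel_some {L : Type} (ℓ : Sym2 α → L) (u v a b : α) :
    extendLabel ℓ u v s(some a, some b) = ℓ s(a, b) := rfl

lemma extendLabel_none {L : Type} (ℓ : Sym2 α → L) (u v : α) (w : Option α) :
    extendLabel ℓ u v s(none, w) = ℓ s(u, v) := by
  cases w <;> rfl

lemma subdivideEdge_edgeSet {G : SimpleGraph α} {u v : α} (h : G.Adj u v) :
    (subdivideEdge G u v).edgeSet =
      Sym2.map some '' (G.edgeSet \ {s(u, v)}) ∪ {s(none, some u), s(none, some v)} := by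
  rw [subdivideEdge, edgeSet_fromEdgeSet]
  ext e
  simp only [Set.mem_diff, Set.mem_union, Set.mem_setOf_eq, Set.mem_insert_iff,
    Set.mem_singleton_iff, Set.mem_image]
  constructor
  · rintro ⟨h1 | h1, -⟩
    · obtain ⟨a, b, hab, hne, rfl⟩ := h1
      exact Or.inl ⟨s(a, b), ⟨⟨hab, hne⟩, Sym2.map_pair_eq _ _ _⟩⟩
    · exact Or.inr h1
  · rintro (⟨e0, ⟨he0, hne0⟩, rfl⟩ | h1 | h1)
    · induction e0 with
      | _ a b =>
        refine ⟨Or.inl ⟨a, b, he0, hne0, (Sym2.map_pair_eq _ _ _).symm ▸ rfl⟩, ?_⟩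
        rw [Sym2.map_pair_eq, Sym2.mem_diagSet, Sym2.mk_isDiag_iff]
        intro hc
        exact G.ne_of_adj he0 (Option.some_injective α hc)
    · rw [h1]
      refine ⟨Or.inr (Or.inl rfl), ?_⟩
      rw [Sym2.mem_diagSet, Sym2.mk_isDiag_iff]
      simp
    · rw [h1]
      refine ⟨Or.inr (Or.inr rfl), ?_⟩
      rw [Sym2.mem_diagSet, Sym2.mk_isDiag_iff]
      simp

def liftEdges (u v : α) (X : Set (Sym2 α)) : Set (Sym2 (Option α)) :=
  Sym2.map some '' (X \ {s(u, v)}) ∪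
    {e | (e = s(none, some u) ∨ e = s(none, some v)) ∧ s(u, v) ∈ X}

lemma liftEdges_union (u v : α) (X Y : Set (Sym2 α)) :
    liftEdges u v (X ∪ Y) = liftEdges u v X ∪ liftEdges u v Y := by
  unfold liftEdges
  rw [Set.union_diff_distrib, Set.image_union]
  ext e
  simp only [Set.mem_union, Set.mem_setOf_eq]
  tauto

lemma liftEdges_disjoint {u v : α} {X Y : Set (Sym2 α)} (hXY : Disjoint X Y) :
    Disjoint (liftEdges u v X) (liftEdges u v Y) := by
  rw [Set.disjoint_left]
  intro e he he'
  simp only [liftEdges, Set.mem_union, Set.mem_image, Set.mem_setOf_eq, Set.mem_diff,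
    Set.mem_singleton_iff] at he he'
  rcases he with ⟨e0, ⟨he0, -⟩, rfl⟩ | ⟨he, hX⟩
  · rcases he' with ⟨e1, ⟨he1, -⟩, heq⟩ | ⟨he', -⟩
    · exact Set.disjoint_left.mp hXY he0
        ((Sym2.map.injective (Option.some_injective α) heq) ▸ he1)
    · rcases he' with h | h
      · exact none_not_mem_map_some e0 (by rw [h]; exact Sym2.mem_mk_left _ _)
      · exact none_not_mem_map_some e0 (by rw [h]; exact Sym2.mem_mk_left _ _)
  · rcases he' with ⟨e1, -, heq⟩ | ⟨-, hY⟩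
    · rcases he with h | h
      · exact none_not_mem_map_some e1 (by rw [heq, h]; exact Sym2.mem_mk_left _ _)
      · exact none_not_mem_map_some e1 (by rw [heq, h]; exact Sym2.mem_mk_left _ _)
    · exact Set.disjoint_left.mp hXY hX hY

lemma liftEdges_even {u v : α} (huv : u ≠ v) {X : Set (Sym2 α)} (hX : X.Finite)
    (hEv : ∀ w, Even (esdeg X w)) : ∀ w', Even (esdeg (liftEdges u v X) w') := by
  intro w'
  have hee : s(none, some u) ≠ s(none, some v) := by
    intro hc
    rw [Sym2.eq_iff] at hc
    rcases hc with ⟨-, h2⟩ | ⟨h1, -⟩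
    · exact huv (Option.some_injective α h2)
    · exact nomatch h1
  have hfin1 : (Sym2.map some '' (X \ {s(u, v)})).Finite := (hX.diff).image _
  have hTsub : {e | (e = s(none, some u) ∨ e = s(none, some v)) ∧ s(u, v) ∈ X}
      ⊆ {s(none, some u), s(none, some v)} := by
    rintro e ⟨hor, -⟩
    rcases hor with h | h
    · exact Or.inl h
    · exact Or.inr h
  have hfin2 : ({e | (e = s(none, some u) ∨ e = s(none, some v)) ∧ s(u, v) ∈ X} :
      Set (Sym2 (Option α))).Finite :=
    ((Set.finite_singleton _).insert _).subset hTsub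
  have hdisjT : Disjoint (Sym2.map some '' (X \ {s(u, v)}))
      {e | (e = s(none, some u) ∨ e = s(none, some v)) ∧ s(u, v) ∈ X} := by
    rw [Set.disjoint_left]
    rintro e ⟨e0, -, rfl⟩ ⟨hor, -⟩
    rcases hor with h | h
    · exact none_not_mem_map_some e0 (by rw [h]; exact Sym2.mem_mk_left _ _)
    · exact none_not_mem_map_some e0 (by rw [h]; exact Sym2.mem_mk_left _ _)
  rw [show liftEdges u v X = Sym2.map some '' (X \ {s(u, v)}) ∪
    {e | (e = s(none, some u) ∨ e = s(none, some v)) ∧ s(u, v) ∈ X} from rfl,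
    esdeg_union hdisjT hfin1 hfin2]
  by_cases hin : s(u, v) ∈ X
  · have hTeq : {e | (e = s(none, some u) ∨ e = s(none, some v)) ∧ s(u, v) ∈ X}
        = {s(none, some u)} ∪ {s(none, some v)} := by
      ext e
      simp only [Set.mem_setOf_eq, Set.mem_union, Set.mem_singleton_iff]
      tauto
    rw [hTeq, esdeg_union (Set.disjoint_singleton_left.mpr (by simp [hee]))
      (Set.finite_singleton _) (Set.finite_singleton _)]
    cases w' with
    | none =>
      rw [esdeg_map_not_mem _ (by simp), esdeg_singleton_mem (Sym2.mem_mk_left _ _),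
        esdeg_singleton_mem (Sym2.mem_mk_left _ _)]
      decide
    | some w =>
      have hnone : ∀ b : α, (some w : Option α) ∈ s(none, some b) ↔ w = b := by
        intro b
        rw [Sym2.mem_iff]
        constructor
        · rintro (hc | hc)
          · exact nomatch hc
          · exact Option.some_injective α hc
        · intro hc
          right
          rw [hc]
      by_cases hwu : w = u
      · subst hwu
        rw [esdeg_map (Option.some_injective α),
          esdeg_singleton_mem ((hnone w).mpr rfl),
          esdeg_singleton_not_mem (fun hc => huv ((hnone v).mp hc))]
        have hkey := esdeg_diff_singleton_mem hX hin (Sym2.mem_mk_left w v)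
        have hthis := hEv w
        rw [← hkey] at hthis
        rw [Nat.even_add] at hthis ⊢
        simpa using hthis
      · by_cases hwv : w = v
        · subst hwv
          rw [esdeg_map (Option.some_injective α),
            esdeg_singleton_not_mem (fun hc => huv ((hnone u).mp hc).symm),
            esdeg_singleton_mem ((hnone w).mpr rfl)]
          have hkey := esdeg_diff_singleton_mem hX hin (Sym2.mem_mk_right u w)
          have hthis := hEv w
          rw [← hkey] at hthis
          rw [Nat.even_add] at hthis ⊢
          simpa using hthis
        · rw [esdeg_map (Option.some_injective α),
            esdeg_singleton_not_mem (fun hc => hwu ((hnone u).mp hc)),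
            esdeg_singleton_not_mem (fun hc => hwv ((hnone v).mp hc)),
            esdeg_diff_singleton_not_mem (by rw [Sym2.mem_iff]; push_neg; exact ⟨hwu, hwv⟩)]
          simpa using hEv w
  · have hTeq : {e | (e = s(none, some u) ∨ e = s(none, some v)) ∧ s(u, v) ∈ X}
        = (∅ : Set (Sym2 (Option α))) := by
      ext e
      simp [hin]
    rw [hTeq, esdeg_empty', Set.diff_singleton_eq_self hin]
    cases w' with
    | none =>
      rw [esdeg_map_not_mem _ (by simp)]
      decide
    | some w =>
      rw [esdeg_map (Option.some_injective α)]
      simpa using hEv w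

lemma Pprop_subdivideEdge {G : SimpleGraph α} {ℓ : Sym2 α → Prop} {u v : α}
    (h : G.Adj u v) (hP : Pprop G ℓ) :
    Pprop (subdivideEdge G u v) (extendLabel ℓ u v) := by
  obtain ⟨A, B, hfin, hun, hdisj, hevA, hevB⟩ := hP
  have huv : u ≠ v := h.ne
  have hE' := subdivideEdge_edgeSet h
  have claim : ∀ p : Prop → Prop,
      {e ∈ (subdivideEdge G u v).edgeSet | p (extendLabel ℓ u v e)}
        = liftEdges u v {e ∈ G.edgeSet | p (ℓ e)} := by
    intro p
    ext e
    simp only [Set.mem_setOf_eq]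
    constructor
    · rintro ⟨he, hp⟩
      rw [hE'] at he
      rcases he with ⟨e0, ⟨he0, hne0⟩, rfl⟩ | he | he
      · left
        refine ⟨e0, ⟨⟨he0, ?_⟩, hne0⟩, rfl⟩
        induction e0 with
        | _ a b =>
          rw [Sym2.map_pair_eq] at hp
          rw [← extendLabel_some ℓ u v a b]
          exact hp
      · right
        rw [he] at hp
        rw [extendLabel_none] at hp
        exact ⟨Or.inl he, h, hp⟩
      · right
        rw [he] at hp
        rw [extendLabel_none] at hp
        exact ⟨Or.inr he, h, hp⟩
    · rintro (⟨e0, ⟨⟨he0, hp0⟩, hne0⟩, rfl⟩ | ⟨hor, -, hp0⟩)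
      · constructor
        · rw [hE']
          exact Or.inl ⟨e0, ⟨he0, hne0⟩, rfl⟩
        · induction e0 with
          | _ a b =>
            rw [Sym2.map_pair_eq, extendLabel_some]
            exact hp0
      · rcases hor with hor | hor <;> rw [hor]
        · exact ⟨by rw [hE']; exact Or.inr (Or.inl rfl), by rw [extendLabel_none]; exact hp0⟩
        · exact ⟨by rw [hE']; exact Or.inr (Or.inr rfl), by rw [extendLabel_none]; exact hp0⟩
  have hAE : A ⊆ G.edgeSet := by
    intro e he
    have : e ∈ A ∪ B := Or.inl he
    rw [hun] at this
    exact this.1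
  have hBE : B ⊆ G.edgeSet := by
    intro e he
    have : e ∈ A ∪ B := Or.inr he
    rw [hun] at this
    exact this.1
  refine ⟨liftEdges u v A, liftEdges u v B, ?_, ?_, ?_, ?_, ?_⟩
  · rw [hE']
    exact ((hfin.diff).image _).union ((Set.finite_singleton _).insert _)
  · rw [← liftEdges_union, hun]
    exact (claim (fun q => ¬ q)).symm
  · exact liftEdges_disjoint hdisj
  · rw [claim (fun q => q), ← liftEdges_union]
    exact liftEdges_even huv ((hfin.subset (Set.sep_subset _ _)).union (hfin.subset hAE)) hevA
  · rw [claim (fun q => q), ← liftEdges_union]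
    exact liftEdges_even huv ((hfin.subset (Set.sep_subset _ _)).union (hfin.subset hBE)) hevB

lemma Pprop_of_subdivision : ∀ {α β : Type} {G : SimpleGraph α} {ℓG : Sym2 α → Prop}
    {K : SimpleGraph β} {ℓK : Sym2 β → Prop},
    IsLabeledSubdivisionOf G ℓG K ℓK → Pprop K ℓK → Pprop G ℓG := by
  intro α β G ℓG K ℓK h
  induction h with
  | base G ℓG K ℓK f hf =>
    intro hP
    refine Pprop_iso (f.symm : K ≃g G) ?_ hP
    intro e he
    induction e with
    | _ a b =>
      rw [Sym2.map_pair_eq]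
      have hadj : G.Adj (f.symm a) (f.symm b) := f.symm.map_adj_iff.mpr he
      have := hf _ _ hadj
      rw [f.apply_symm_apply, f.apply_symm_apply] at this
      exact this.symm
  | step G ℓG K ℓK u v hadj hGK ih =>
    intro hP
    exact Pprop_subdivideEdge hadj (ih hP)
  | iso G G' ℓG ℓG' K ℓK f hf hGK ih =>
    intro hP
    refine Pprop_iso f ?_ (ih hP)
    intro e he
    induction e with
    | _ a b =>
      rw [Sym2.map_pair_eq]
      exact hf a b he

end Transfer
end CDC

namespace CDC
open SimpleGraph

lemma Pprop_push {V : Type} [Fintype V] (G : SimpleGraph V) (M : Set (Sym2 V))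
    (hP : Pprop (SimpleGraph.induce G.support G) (fun e => e.map Subtype.val ∈ M)) :
    ∃ A B : Set (Sym2 V),
      A ∪ B = {e ∈ G.edgeSet | e ∉ M} ∧ Disjoint A B ∧
      IsEvenEdgeSetAux ({e ∈ G.edgeSet | e ∈ M} ∪ A) ∧
      IsEvenEdgeSetAux ({e ∈ G.edgeSet | e ∈ M} ∪ B) ∧
      A ⊆ G.edgeSet ∧ B ⊆ G.edgeSet := by
  obtain ⟨A0, B0, -, hun, hdisj, hevA, hevB⟩ := hP
  have hval_inj : Function.Injective (Subtype.val : ↥G.support → V) := Subtype.val_injective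
  have claimE : Sym2.map Subtype.val '' (SimpleGraph.induce G.support G).edgeSet
      = G.edgeSet := by
    ext e
    constructor
    · rintro ⟨e0, he0, rfl⟩
      exact induce_edge_map_mem he0
    · intro he
      induction e with
      | _ a b =>
        have hab : G.Adj a b := he
        have ha : a ∈ G.support := ⟨b, hab⟩
        have hb : b ∈ G.support := ⟨a, hab.symm⟩
        refine ⟨s(⟨a, ha⟩, ⟨b, hb⟩), ?_, Sym2.map_pair_eq _ _ _⟩
        exact hab
  have claim : ∀ p : Prop → Prop,
      Sym2.map Subtype.val ''
        {e ∈ (SimpleGraph.induce G.support G).edgeSet | p (e.map Subtype.val ∈ M)}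
      = {e ∈ G.edgeSet | p (e ∈ M)} := by
    intro p
    ext e
    constructor
    · rintro ⟨e0, ⟨he0, hp⟩, rfl⟩
      exact ⟨(by rw [← claimE]; exact ⟨e0, he0, rfl⟩ : _ ∈ G.edgeSet), hp⟩
    · rintro ⟨he, hp⟩
      rw [← claimE] at he
      obtain ⟨e0, he0, rfl⟩ := he
      exact ⟨e0, ⟨he0, hp⟩, rfl⟩
  refine ⟨Sym2.map Subtype.val '' A0, Sym2.map Subtype.val '' B0, ?_, ?_, ?_, ?_, ?_, ?_⟩
  · rw [← Set.image_union, hun]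
    exact claim (fun q => ¬ q)
  · exact Set.disjoint_image_of_injective (Sym2.map.injective hval_inj) hdisj
  · intro w
    have hrw : {e ∈ G.edgeSet | e ∈ M} ∪ Sym2.map Subtype.val '' A0
        = Sym2.map Subtype.val ''
          ({e ∈ (SimpleGraph.induce G.support G).edgeSet | e.map Subtype.val ∈ M} ∪ A0) := by
      rw [Set.image_union, claim (fun q => q)]
    rw [hrw]
    exact isEven_image hval_inj (fun x => hevA x) w
  · intro w
    have hrw : {e ∈ G.edgeSet | e ∈ M} ∪ Sym2.map Subtype.val '' B0
        = Sym2.map Subtype.val ''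
          ({e ∈ (SimpleGraph.induce G.support G).edgeSet | e.map Subtype.val ∈ M} ∪ B0) := by
      rw [Set.image_union, claim (fun q => q)]
    rw [hrw]
    exact isEven_image hval_inj (fun x => hevB x) w
  · intro e he
    have : e ∈ Sym2.map Subtype.val '' A0 ∪ Sym2.map Subtype.val '' B0 := Or.inl he
    rw [← Set.image_union, hun, claim (fun q => ¬ q)] at this
    exact this.1
  · intro e he
    have : e ∈ Sym2.map Subtype.val '' A0 ∪ Sym2.map Subtype.val '' B0 := Or.inr he
    rw [← Set.image_union, hun, claim (fun q => ¬ q)] at this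
    exact this.1

end CDC

set_option maxHeartbeats 2000000 in
open CDC SimpleGraph in
/-- if a bridgeless cubic graph `G` is covered by three subgraphs so that
each edge of a distinguished set `M` lies in exactly one of them and each other edge
in exactly two, and each subgraph, with its edges labelled by membership in `M`, is a
subdivision of a cubic graph whose non-`M`-labelled edges form an even 2-factor, then
`G` has a 6-even-subgraph double cover. -/
theorem stmt_9 {V : Type} [Fintype V] (G : SimpleGraph V) (hcub : IsCubic G)
    (hbr : Bridgeless G) (M : Set (Sym2 V)) (hM : M ⊆ G.edgeSet)
    (K : Fin 3 → SimpleGraph V) (hKG : ∀ i, K i ≤ G)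
    (hcov1 : ∀ e ∈ M, {i : Fin 3 | e ∈ (K i).edgeSet}.ncard = 1)
    (hcov2 : ∀ e ∈ G.edgeSet, e ∉ M → {i : Fin 3 | e ∈ (K i).edgeSet}.ncard = 2)
    (hsup : ∀ i : Fin 3, ∃ (W : Type) (_ : Fintype W) (Q : SimpleGraph W)
      (ℓQ : Sym2 W → Prop),
        IsCubic Q ∧
        IsLabeledSubdivisionOf (SimpleGraph.induce (K i).support (K i))
          (fun e => e.map Subtype.val ∈ M) Q ℓQ ∧
        IsEvenTwoFactorSet Q {e ∈ Q.edgeSet | ¬ ℓQ e}) :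
    HasSixDoubleCover G := by
  classical
  have key : ∀ i : Fin 3, ∃ A B : Set (Sym2 V),
      A ∪ B = {e ∈ (K i).edgeSet | e ∉ M} ∧ Disjoint A B ∧
      IsEvenEdgeSetAux ({e ∈ (K i).edgeSet | e ∈ M} ∪ A) ∧
      IsEvenEdgeSetAux ({e ∈ (K i).edgeSet | e ∈ M} ∪ B) ∧
      A ⊆ (K i).edgeSet ∧ B ⊆ (K i).edgeSet := by
    intro i
    obtain ⟨W, hW, Q, ℓQ, hQcub, hsubdiv, hS, h2, hev⟩ := hsup i
    haveI := hW
    exact Pprop_push (K i) M (Pprop_of_subdivision hsubdiv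
      (Pprop_of_even_two_factor Q ℓQ hQcub h2 hev))
  choose A B hAB hdisjAB hevA hevB hAE hBE using key
  have hKE : ∀ i, (K i).edgeSet ⊆ G.edgeSet := fun i => edgeSet_mono (hKG i)
  set D : Fin 6 → Set (Sym2 V) := fun j =>
    if j.1 % 2 = 0 then {e ∈ (K ⟨j.1 / 2, by omega⟩).edgeSet | e ∈ M} ∪ A ⟨j.1 / 2, by omega⟩
    else {e ∈ (K ⟨j.1 / 2, by omega⟩).edgeSet | e ∈ M} ∪ B ⟨j.1 / 2, by omega⟩ with hD
  have hDsub : ∀ j, D j ⊆ G.edgeSet := by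
    intro j
    simp only [hD]
    by_cases hj : j.1 % 2 = 0
    · rw [if_pos hj]
      rintro e (⟨h1, -⟩ | hA)
      · exact hKE _ h1
      · exact hKE _ (hAE _ hA)
    · rw [if_neg hj]
      rintro e (⟨h1, -⟩ | hB)
      · exact hKE _ h1
      · exact hKE _ (hBE _ hB)
  refine ⟨D, ?_, ?_⟩
  · intro j
    refine ⟨hDsub j, ?_⟩
    intro v
    simp only [hD]
    by_cases hj : j.1 % 2 = 0
    · rw [if_pos hj]
      exact hevA _ v
    · rw [if_neg hj]
      exact hevB _ v
  · intro e he
    have hcard2 : ∀ (P : Fin 6 → Prop) (j1 j2 : Fin 6), j1 ≠ j2 →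
        (∀ j, P j ↔ (j = j1 ∨ j = j2)) → {j | P j}.ncard = 2 := by
      intro P j1 j2 hne hiff
      rw [show {j | P j} = {j1, j2} from by ext j; simp [hiff j], Set.ncard_pair hne]
    by_cases heM : e ∈ M
    · obtain ⟨i0, hi0⟩ := Set.ncard_eq_one.mp (hcov1 e heM)
      have hmemK : ∀ i, e ∈ (K i).edgeSet ↔ i = i0 := by
        intro i
        rw [show (e ∈ (K i).edgeSet) = (i ∈ {i : Fin 3 | e ∈ (K i).edgeSet}) from rfl, hi0]
        exact Set.mem_singleton_iff
      have hAi : ∀ i, e ∉ A i := by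
        intro i hc
        have : e ∈ A i ∪ B i := Or.inl hc
        rw [hAB i] at this
        exact this.2 heM
      have hBi : ∀ i, e ∉ B i := by
        intro i hc
        have : e ∈ A i ∪ B i := Or.inr hc
        rw [hAB i] at this
        exact this.2 heM
      refine hcard2 _ ⟨2 * i0.1, by omega⟩ ⟨2 * i0.1 + 1, by omega⟩
        (fun hc => by have := congrArg Fin.val hc; simp only [] at this; omega) ?_
      intro j
      have hDj : e ∈ D j ↔ e ∈ (K ⟨j.1 / 2, by omega⟩).edgeSet := by
        simp only [hD]
        by_cases hj : j.1 % 2 = 0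
        · rw [if_pos hj]
          constructor
          · rintro (⟨h1, -⟩ | hA)
            · exact h1
            · exact absurd hA (hAi _)
          · exact fun h => Or.inl ⟨h, heM⟩
        · rw [if_neg hj]
          constructor
          · rintro (⟨h1, -⟩ | hB)
            · exact h1
            · exact absurd hB (hBi _)
          · exact fun h => Or.inl ⟨h, heM⟩
      rw [hDj, hmemK]
      constructor
      · intro h
        have hval := congrArg Fin.val h
        simp only [] at hval
        have hj6 : j.1 < 6 := j.2
        have : j.1 = 2 * i0.1 ∨ j.1 = 2 * i0.1 + 1 := by omega
        rcases this with h' | h'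
        · exact Or.inl (Fin.val_injective h')
        · exact Or.inr (Fin.val_injective h')
      · rintro (rfl | rfl) <;> (apply Fin.val_injective; simp only []; omega)
    · obtain ⟨i1, i2, hne12, hset⟩ := Set.ncard_eq_two.mp (hcov2 e he heM)
      have hmemK : ∀ i, e ∈ (K i).edgeSet ↔ (i = i1 ∨ i = i2) := by
        intro i
        rw [show (e ∈ (K i).edgeSet) = (i ∈ {i : Fin 3 | e ∈ (K i).edgeSet}) from rfl, hset]
        simp
      have heAB : ∀ i, e ∈ (K i).edgeSet → (e ∈ A i ∨ e ∈ B i) := by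
        intro i hi
        have : e ∈ A i ∪ B i := by rw [hAB i]; exact ⟨hi, heM⟩
        exact this
      have hnAB : ∀ i, e ∈ A i → e ∈ B i → False := by
        intro i h1 h2
        exact Set.disjoint_left.mp (hdisjAB i) h1 h2
      have he1 : e ∈ (K i1).edgeSet := (hmemK i1).mpr (Or.inl rfl)
      have he2 : e ∈ (K i2).edgeSet := (hmemK i2).mpr (Or.inr rfl)
      have hDj : ∀ j : Fin 6, e ∈ D j ↔
          ((j.1 % 2 = 0 ∧ e ∈ A ⟨j.1 / 2, by omega⟩) ∨
            (j.1 % 2 ≠ 0 ∧ e ∈ B ⟨j.1 / 2, by omega⟩)) := by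
        intro j
        simp only [hD]
        by_cases hj : j.1 % 2 = 0
        · rw [if_pos hj]
          constructor
          · rintro (⟨-, hM⟩ | hA)
            · exact absurd hM heM
            · exact Or.inl ⟨hj, hA⟩
          · rintro (⟨-, hA⟩ | ⟨hc, -⟩)
            · exact Or.inr hA
            · exact absurd hj hc
        · rw [if_neg hj]
          constructor
          · rintro (⟨-, hM⟩ | hB)
            · exact absurd hM heM
            · exact Or.inr ⟨hj, hB⟩
          · rintro (⟨hc, -⟩ | ⟨-, hB⟩)
            · exact absurd hc hj
            · exact Or.inr hB
      set j1 : Fin 6 := if e ∈ A i1 then ⟨2 * i1.1, by omega⟩ else ⟨2 * i1.1 + 1, by omega⟩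
        with hj1
      set j2 : Fin 6 := if e ∈ A i2 then ⟨2 * i2.1, by omega⟩ else ⟨2 * i2.1 + 1, by omega⟩
        with hj2
      have hj1val : (j1.1 = 2 * i1.1 ∧ e ∈ A i1) ∨ (j1.1 = 2 * i1.1 + 1 ∧ e ∈ B i1 ∧ e ∉ A i1) := by
        rw [hj1]
        by_cases hA : e ∈ A i1
        · exact Or.inl ⟨by rw [if_pos hA], hA⟩
        · refine Or.inr ⟨by rw [if_neg hA], ?_, hA⟩
          rcases heAB i1 he1 with h | h
          · exact absurd h hA
          · exact h
      have hj2val : (j2.1 = 2 * i2.1 ∧ e ∈ A i2) ∨ (j2.1 = 2 * i2.1 + 1 ∧ e ∈ B i2 ∧ e ∉ A i2) := by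
        rw [hj2]
        by_cases hA : e ∈ A i2
        · exact Or.inl ⟨by rw [if_pos hA], hA⟩
        · refine Or.inr ⟨by rw [if_neg hA], ?_, hA⟩
          rcases heAB i2 he2 with h | h
          · exact absurd h hA
          · exact h
      have hne12' : i1.1 ≠ i2.1 := fun h => hne12 (Fin.val_injective h)
      refine hcard2 _ j1 j2 ?_ ?_
      · intro hc
        have hval := congrArg Fin.val hc
        rcases hj1val with ⟨hv1, -⟩ | ⟨hv1, -⟩ <;> rcases hj2val with ⟨hv2, -⟩ | ⟨hv2, -⟩ <;>
          omega
      · intro j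
        rw [hDj j]
        have hj6 : j.1 < 6 := j.2
        constructor
        · rintro (⟨hj0, hA⟩ | ⟨hj0, hB⟩)
          · have hiK : (⟨j.1 / 2, by omega⟩ : Fin 3) = i1 ∨ (⟨j.1 / 2, by omega⟩ : Fin 3) = i2 :=
              (hmemK _).mp (hAE _ hA)
            rcases hiK with h | h
            · rw [h] at hA
              left
              apply Fin.val_injective
              have hv := congrArg Fin.val h
              simp only [] at hv
              rcases hj1val with ⟨hv1, -⟩ | ⟨-, -, hnA⟩
              · omega
              · exact absurd hA hnA
            · rw [h] at hA
              right
              apply Fin.val_injective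
              have hv := congrArg Fin.val h
              simp only [] at hv
              rcases hj2val with ⟨hv2, -⟩ | ⟨-, -, hnA⟩
              · omega
              · exact absurd hA hnA
          · have hiK : (⟨j.1 / 2, by omega⟩ : Fin 3) = i1 ∨ (⟨j.1 / 2, by omega⟩ : Fin 3) = i2 :=
              (hmemK _).mp (hBE _ hB)
            rcases hiK with h | h
            · rw [h] at hB
              left
              apply Fin.val_injective
              have hv := congrArg Fin.val h
              simp only [] at hv
              rcases hj1val with ⟨-, hA⟩ | ⟨hv1, -, -⟩
              · exact absurd hA (fun hA' => hnAB i1 hA' hB)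
              · omega
            · rw [h] at hB
              right
              apply Fin.val_injective
              have hv := congrArg Fin.val h
              simp only [] at hv
              rcases hj2val with ⟨-, hA⟩ | ⟨hv2, -, -⟩
              · exact absurd hA (fun hA' => hnAB i2 hA' hB)
              · omega
        · rintro (rfl | rfl)
          · rcases hj1val with ⟨hv1, hA⟩ | ⟨hv1, hB, -⟩
            · refine Or.inl ⟨by omega, ?_⟩
              have : (⟨j1.1 / 2, by omega⟩ : Fin 3) = i1 := by
                apply Fin.val_injective
                simp only []
                omega
              rw [this]
              exact hA
            · refine Or.inr ⟨by omega, ?_⟩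
              have : (⟨j1.1 / 2, by omega⟩ : Fin 3) = i1 := by
                apply Fin.val_injective
                simp only []
                omega
              rw [this]
              exact hB
          · rcases hj2val with ⟨hv2, hA⟩ | ⟨hv2, hB, -⟩
            · refine Or.inl ⟨by omega, ?_⟩
              have : (⟨j2.1 / 2, by omega⟩ : Fin 3) = i2 := by
                apply Fin.val_injective
                simp only []
                omega
              rw [this]
              exact hA
            · refine Or.inr ⟨by omega, ?_⟩
              have : (⟨j2.1 / 2, by omega⟩ : Fin 3) = i2 := by
                apply Fin.val_injective
                simp only []
                omega
              rw [this]
              exact hB
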